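/- arXiv:2309.13200 — 5 statements merged into one kernel-verified Lean document; each statement's English description precedes it below -/
import Mathlib

section
/- Let H be a real Hilbert space and f : H → ℝ ∪ {+∞} proper, lower semicontinuous and convex with argmin f nonempty. Then prox_{γ f}(0) converges strongly to x*, the minimum norm element of argmin f, as γ → +∞. -/
private lemma clear_div {c a b u v : ℝ} (hc : 0 < c) (h : a + u / c ≤ b + v / c) :
    c * a + u ≤ c * b + v := by
  have h1 : c * (a + u / c) ≤ c * (b + v / c) := mul_le_mul_of_nonneg_left h hc.le
  have e1 : c * (a + u / c) = c * a + u := by field_simp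
  have e2 : c * (b + v / c) = c * b + v := by field_simp
  linarith [h1, e1.symm.le, e2.le]

/-- For a proper lsc convex `f : H → ℝ ∪ {+∞}` with nonempty argmin,
`prox_{γ f}(0)` converges strongly, as `γ → +∞`, to the minimum norm element of `argmin f`. -/
theorem stmt_1 {H : Type*} [NormedAddCommGroup H] [InnerProductSpace ℝ H] [CompleteSpace H]
    (f : H → EReal)
    (hbot : ∀ x, f x ≠ ⊥) (htop : ∃ x, f x ≠ ⊤)
    (hlsc : LowerSemicontinuous f)
    (hconv : ∀ x y : H, ∀ a b : ℝ, 0 ≤ a → 0 ≤ b → a + b = 1 →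
      f (a • x + b • y) ≤ (a : EReal) * f x + (b : EReal) * f y)
    (y : ℝ → H)
    (hy : ∀ γ : ℝ, 0 < γ → ∀ x : H,
      f (y γ) + ((‖y γ‖ ^ 2 / (2 * γ) : ℝ) : EReal)
        ≤ f x + ((‖x‖ ^ 2 / (2 * γ) : ℝ) : EReal))
    (xstar : H)
    (hxs_min : ∀ x, f xstar ≤ f x)
    (hxs_norm : ∀ z : H, (∀ x, f z ≤ f x) → ‖xstar‖ ≤ ‖z‖) :
    Filter.Tendsto y Filter.atTop (nhds xstar) := by
  obtain ⟨x0, hx0⟩ := htop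
  -- f xstar is finite
  have hxstop : f xstar ≠ ⊤ := fun h => hx0 (top_le_iff.mp (h ▸ hxs_min x0))
  set m : ℝ := (f xstar).toReal with hm_def
  have hm : f xstar = (m : EReal) := (EReal.coe_toReal hxstop (hbot _)).symm
  -- f (y γ) is finite for γ > 0
  have hytop : ∀ γ : ℝ, 0 < γ → f (y γ) ≠ ⊤ := by
    intro γ hγ
    have h := hy γ hγ xstar
    rw [hm, ← EReal.coe_add] at h
    have h1 : f (y γ) ≤ ((m + ‖xstar‖ ^ 2 / (2 * γ) : ℝ) : EReal) :=
      le_trans (le_add_of_nonneg_right (by exact_mod_cast (by positivity : (0:ℝ) ≤ ‖y γ‖ ^ 2 / (2 * γ)))) h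
    exact (h1.trans_lt (EReal.coe_lt_top _)).ne
  set φ : ℝ → ℝ := fun γ => (f (y γ)).toReal with hφ_def
  have hφ : ∀ γ : ℝ, 0 < γ → f (y γ) = ((φ γ : ℝ) : EReal) := fun γ hγ =>
    (EReal.coe_toReal (hytop γ hγ) (hbot _)).symm
  -- m ≤ φ γ
  have hmφ : ∀ γ : ℝ, 0 < γ → m ≤ φ γ := by
    intro γ hγ
    have := hxs_min (y γ)
    rw [hm, hφ γ hγ] at this
    exact_mod_cast this
  -- cleared inequality A
  have hA : ∀ γ : ℝ, 0 < γ → ∀ x : H, ∀ r : ℝ, f x = (r : EReal) →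
      2 * γ * φ γ + ‖y γ‖ ^ 2 ≤ 2 * γ * r + ‖x‖ ^ 2 := by
    intro γ hγ x r hr
    have h := hy γ hγ x
    rw [hφ γ hγ, hr, ← EReal.coe_add, ← EReal.coe_add] at h
    have h' : φ γ + ‖y γ‖ ^ 2 / (2 * γ) ≤ r + ‖x‖ ^ 2 / (2 * γ) := by exact_mod_cast h
    exact clear_div (by linarith) h'
  -- cleared inequality B (strong convexity)
  have hB : ∀ γ : ℝ, 0 < γ → ∀ x : H, ∀ r : ℝ, f x = (r : EReal) →
      4 * γ * φ γ + 2 * ‖y γ‖ ^ 2 + ‖x - y γ‖ ^ 2 ≤ 4 * γ * r + 2 * ‖x‖ ^ 2 := by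
    intro γ hγ x r hr
    set md : H := (1/2 : ℝ) • (y γ) + (1/2 : ℝ) • x with hmd
    have hpar : 4 * ‖md‖ ^ 2 = 2 * (‖y γ‖ ^ 2 + ‖x‖ ^ 2) - ‖x - y γ‖ ^ 2 := by
      have e : md = (1/2 : ℝ) • (y γ + x) := by rw [hmd, smul_add]
      have en : ‖md‖ = ‖y γ + x‖ / 2 := by
        rw [e, norm_smul]
        simp [Real.norm_eq_abs]
        ring
      have hp := parallelogram_law_with_norm ℝ (y γ) x
      have hrev : ‖x - y γ‖ = ‖y γ - x‖ := norm_sub_rev _ _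
      rw [en, hrev]
      ring_nf
      nlinarith [hp]
    have h2 := hconv (y γ) x (1/2) (1/2) (by norm_num) (by norm_num) (by norm_num)
    rw [hφ γ hγ, hr, ← EReal.coe_mul, ← EReal.coe_mul, ← EReal.coe_add] at h2
    have h1 := hy γ hγ md
    rw [hφ γ hγ] at h1
    have h3 : ((φ γ : ℝ) : EReal) + ((‖y γ‖ ^ 2 / (2 * γ) : ℝ) : EReal)
        ≤ (((1:ℝ)/2 * φ γ + 1/2 * r : ℝ) : EReal) + ((‖md‖ ^ 2 / (2 * γ) : ℝ) : EReal) :=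
      h1.trans (add_le_add h2 le_rfl)
    rw [← EReal.coe_add, ← EReal.coe_add] at h3
    have h4 : φ γ + ‖y γ‖ ^ 2 / (2 * γ) ≤ (1/2 * φ γ + 1/2 * r) + ‖md‖ ^ 2 / (2 * γ) := by
      exact_mod_cast h3
    have h5 := clear_div (by linarith : (0:ℝ) < 2 * γ) h4
    nlinarith [h5, hpar]
  -- boundedness: ‖y γ‖² ≤ ‖xstar‖²
  have hub : ∀ γ : ℝ, 0 < γ → ‖y γ‖ ^ 2 ≤ ‖xstar‖ ^ 2 := by
    intro γ hγ
    have h := hA γ hγ xstar m hm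
    nlinarith [h, hmφ γ hγ, mul_le_mul_of_nonneg_left (hmφ γ hγ) (by linarith : (0:ℝ) ≤ 2 * γ)]
  -- monotonicity of ‖y γ‖²
  have hmono : ∀ γ γ' : ℝ, 0 < γ → γ ≤ γ' → ‖y γ‖ ^ 2 ≤ ‖y γ'‖ ^ 2 := by
    intro γ γ' hγ hle
    rcases eq_or_lt_of_le hle with rfl | hlt
    · exact le_refl _
    have hγ' : 0 < γ' := lt_trans hγ hlt
    have E1 := hA γ hγ (y γ') (φ γ') (hφ γ' hγ')
    have E2 := hA γ' hγ' (y γ) (φ γ) (hφ γ hγ)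
    nlinarith [E1, E2, hγ, hγ', hlt]
  -- Cauchy difference estimate
  have hdiff : ∀ γ γ' : ℝ, 0 < γ → γ ≤ γ' →
      ‖y γ' - y γ‖ ^ 2 ≤ 2 * (‖y γ'‖ ^ 2 - ‖y γ‖ ^ 2) := by
    intro γ γ' hγ hle
    have hγ' : 0 < γ' := lt_of_lt_of_le hγ hle
    have F1 := hB γ hγ (y γ') (φ γ') (hφ γ' hγ')
    have F2 := hA γ' hγ' (y γ) (φ γ) (hφ γ hγ)
    have hn := hmono γ γ' hγ hle
    nlinarith [F1, F2, hn, hγ, hγ']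
  -- the sequence is Cauchy
  set N : ℝ → ℝ := fun γ => ‖y γ‖ ^ 2 with hN_def
  have hSne : (N '' Set.Ici 1).Nonempty := ⟨N 1, 1, Set.mem_Ici.mpr le_rfl, rfl⟩
  have hSbdd : BddAbove (N '' Set.Ici 1) := by
    refine ⟨‖xstar‖ ^ 2, ?_⟩
    rintro _ ⟨γ, hγ, rfl⟩
    exact hub γ (lt_of_lt_of_le one_pos hγ)
  set L : ℝ := sSup (N '' Set.Ici 1) with hL_def
  have hcauchy : CauchySeq y := by
    rw [Metric.cauchySeq_iff]
    intro ε hε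
    have hlt : L - ε ^ 2 / 4 < L := by nlinarith
    obtain ⟨_, ⟨γ₀, hγ₀1, rfl⟩, hgt⟩ := exists_lt_of_lt_csSup hSne hlt
    refine ⟨γ₀, fun a ha b hb => ?_⟩
    have key : ∀ c c' : ℝ, γ₀ ≤ c → c ≤ c' → dist (y c) (y c') < ε := by
      intro c c' hc hcc'
      have hc1 : (1:ℝ) ≤ c := le_trans hγ₀1 hc
      have hcpos : 0 < c := lt_of_lt_of_le one_pos hc1
      have hd := hdiff c c' hcpos hcc'
      have hNc : N γ₀ ≤ N c := hmono γ₀ c (lt_of_lt_of_le one_pos hγ₀1) hc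
      have hNc' : N c' ≤ L := le_csSup hSbdd ⟨c', le_trans hc1 hcc', rfl⟩
      have : ‖y c' - y c‖ ^ 2 < ε ^ 2 := by
        have : ‖y c' - y c‖ ^ 2 ≤ 2 * (N c' - N c) := hd
        nlinarith [hd, hgt, hNc, hNc', hε]
      have := lt_of_pow_lt_pow_left₀ 2 hε.le this
      rw [dist_eq_norm, ← norm_sub_rev]
      exact this
    rcases le_total a b with hab | hab
    · exact key a b ha hab
    · rw [dist_comm]; exact key b a hb hab
  obtain ⟨z, hz⟩ := cauchySeq_tendsto_of_complete hcauchy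
  -- limit of norms
  have hNlim : Filter.Tendsto N Filter.atTop (nhds (‖z‖ ^ 2)) := (hz.norm).pow 2
  -- z is a minimizer
  have hz_min : ∀ x, f z ≤ f x := by
    intro x
    by_cases hx : f x = ⊤
    · rw [hx]; exact le_top
    have hr : f x = (((f x).toReal : ℝ) : EReal) := (EReal.coe_toReal hx (hbot x)).symm
    set r : ℝ := (f x).toReal
    by_contra hcon
    rw [hr] at hcon
    have hlt : ((r : ℝ) : EReal) < f z := not_le.mp hcon
    obtain ⟨c, hc1, hc2⟩ := exists_between hlt
    have hcne : c ≠ ⊤ := hc2.ne_top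
    have hcnb : c ≠ ⊥ := by
      intro h; rw [h] at hc1; exact (not_lt_bot hc1)
    set c' : ℝ := c.toReal with hc'def
    have hcc : c = ((c' : ℝ) : EReal) := (EReal.coe_toReal hcne hcnb).symm
    have hrc' : r < c' := by rw [hcc] at hc1; exact_mod_cast hc1
    have hev1 : ∀ᶠ γ in Filter.atTop, ((c' : ℝ) : EReal) < f (y γ) :=
      hz.eventually (hlsc z _ (hcc ▸ hc2))
    have hev2 : ∀ᶠ γ in Filter.atTop, max 1 (‖x‖ ^ 2 / (c' - r)) ≤ γ :=
      Filter.eventually_atTop.mpr ⟨_, fun b hb => hb⟩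
    obtain ⟨γ, h1, h2⟩ := (hev1.and hev2).exists
    have hγ1 : (1:ℝ) ≤ γ := le_trans (le_max_left _ _) h2
    have hγpos : 0 < γ := lt_of_lt_of_le one_pos hγ1
    have hA' := hA γ hγpos x r hr
    have hcφ : c' < φ γ := by
      rw [hφ γ hγpos] at h1; exact_mod_cast h1
    have hxb : ‖x‖ ^ 2 / (c' - r) ≤ γ := le_trans (le_max_right _ _) h2
    have hxb' : ‖x‖ ^ 2 ≤ γ * (c' - r) := by
      rw [div_le_iff₀ (by linarith)] at hxb; linarith [hxb]
    nlinarith [hA', hcφ, hxb', hγpos, sq_nonneg ‖y γ‖, mul_lt_mul_of_pos_left hcφ (by linarith : (0:ℝ) < 2 * γ)]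
  -- ‖z‖ = ‖xstar‖
  have hzx : ‖xstar‖ ≤ ‖z‖ := hxs_norm z hz_min
  have hz_le : ‖z‖ ^ 2 ≤ ‖xstar‖ ^ 2 := by
    refine le_of_tendsto hNlim (Filter.eventually_atTop.mpr ⟨1, fun γ hγ => ?_⟩)
    exact hub γ (lt_of_lt_of_le one_pos hγ)
  have hzeq : ‖z‖ ^ 2 = ‖xstar‖ ^ 2 :=
    le_antisymm hz_le (pow_le_pow_left₀ (norm_nonneg _) hzx 2)
  rw [hzeq] at hNlim
  -- final squeeze
  have hD : ∀ γ : ℝ, 0 < γ → ‖y γ - xstar‖ ^ 2 ≤ 2 * (‖xstar‖ ^ 2 - ‖y γ‖ ^ 2) := by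
    intro γ hγ
    have h := hB γ hγ xstar m hm
    rw [norm_sub_rev] at h
    nlinarith [h, hmφ γ hγ, mul_le_mul_of_nonneg_left (hmφ γ hγ) (by linarith : (0:ℝ) ≤ 4 * γ)]
  have h0 : Filter.Tendsto (fun γ => 2 * (‖xstar‖ ^ 2 - N γ)) Filter.atTop (nhds 0) := by
    have h1 : Filter.Tendsto (fun γ => ‖xstar‖ ^ 2 - N γ) Filter.atTop
        (nhds (‖xstar‖ ^ 2 - ‖xstar‖ ^ 2)) :=
      Filter.Tendsto.sub tendsto_const_nhds hNlim
    have h2 := h1.const_mul (2:ℝ)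
    simpa using h2
  have hsq : Filter.Tendsto (fun γ => ‖y γ - xstar‖ ^ 2) Filter.atTop (nhds 0) := by
    refine squeeze_zero' ?_ ?_ h0
    · exact Filter.Eventually.of_forall fun γ => sq_nonneg _
    · exact Filter.eventually_atTop.mpr ⟨1, fun γ hγ => hD γ (lt_of_lt_of_le one_pos hγ)⟩
  rw [tendsto_iff_norm_sub_tendsto_zero]
  have hsqrt : Filter.Tendsto (fun γ => Real.sqrt (‖y γ - xstar‖ ^ 2)) Filter.atTop (nhds (Real.sqrt 0)) :=
    (Real.continuous_sqrt.tendsto 0).comp hsq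
  rw [Real.sqrt_zero] at hsqrt
  exact hsqrt.congr fun γ => Real.sqrt_sq (norm_nonneg _)
end

section
/- Let f : H → ℝ ∪ {+∞} be proper lsc convex, d ∈ (0,1), and for β > 0 set y_β = prox_{(β/(1−d)) f}(0). If 0 < β ≤ β', then ‖y_{β'} − y_β‖² ≤ ((β' − β)/β') ⟨y_{β'}, y_{β'} − y_β⟩, and consequently ‖y_{β'} − y_β‖ ≤ ((β' − β)/β') ‖y_{β'}‖. -/
open scoped RealInnerProductSpace

/-- Strong minimality: a minimizer of `f + k‖·‖²` satisfies a quadratic growth bound. -/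
lemma strong_min {H : Type*} [NormedAddCommGroup H] [InnerProductSpace ℝ H]
    (f : H → EReal) (hbot : ∀ x, f x ≠ ⊥)
    (hconv : ∀ x y : H, ∀ a b : ℝ, 0 ≤ a → 0 ≤ b → a + b = 1 →
      f (a • x + b • y) ≤ (a : EReal) * f x + (b : EReal) * f y)
    {k : ℝ} (hk : 0 < k) {y z : H}
    (hy : ∀ w : H, f y + ((k * ‖y‖ ^ 2 : ℝ) : EReal) ≤ f w + ((k * ‖w‖ ^ 2 : ℝ) : EReal))
    (hyT : f y ≠ ⊤) (hzT : f z ≠ ⊤) :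
    (f y).toReal + k * ‖y‖ ^ 2 + k * ‖z - y‖ ^ 2 ≤ (f z).toReal + k * ‖z‖ ^ 2 := by
  set A := (f y).toReal with hAdef
  set C := (f z).toReal with hCdef
  have hA : f y = (A : EReal) := (EReal.coe_toReal hyT (hbot y)).symm
  have hC : f z = (C : EReal) := (EReal.coe_toReal hzT (hbot z)).symm
  apply le_of_forall_pos_le_add
  intro ε hε
  set t : ℝ := min (1/2) (ε / (k * (‖z - y‖ ^ 2 + 1))) with htdef
  have hden : 0 < k * (‖z - y‖ ^ 2 + 1) := by positivity
  have ht0 : 0 < t := lt_min (by norm_num) (div_pos hε hden)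
  have ht1 : t ≤ 1/2 := min_le_left _ _
  have hte : k * t * ‖z - y‖ ^ 2 ≤ ε := by
    have h1 : t ≤ ε / (k * (‖z - y‖ ^ 2 + 1)) := min_le_right _ _
    have h2 : t * (k * (‖z - y‖ ^ 2 + 1)) ≤ ε := by
      rw [← le_div_iff₀ hden]; exact h1
    nlinarith [sq_nonneg ‖z - y‖]
  set w : H := (1 - t) • y + t • z with hwdef
  have hcv := hconv y z (1 - t) t (by linarith) (le_of_lt ht0) (by ring)
  have hmin := hy w
  have hfw : f w ≤ (((1 - t) * A + t * C : ℝ) : EReal) := by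
    rw [hA, hC] at hcv
    calc f w ≤ ((1 - t : ℝ) : EReal) * (A : EReal) + (t : ℝ) * (C : EReal) := hcv
    _ = (((1 - t) * A + t * C : ℝ) : EReal) := by
        rw [← EReal.coe_mul, ← EReal.coe_mul, ← EReal.coe_add]
  have hkey : (A + k * ‖y‖ ^ 2 : ℝ) ≤ ((1 - t) * A + t * C + k * ‖w‖ ^ 2 : ℝ) := by
    have : ((A + k * ‖y‖ ^ 2 : ℝ) : EReal) ≤ (((1 - t) * A + t * C + k * ‖w‖ ^ 2 : ℝ) : EReal) := by
      calc ((A + k * ‖y‖ ^ 2 : ℝ) : EReal) = f y + ((k * ‖y‖ ^ 2 : ℝ) : EReal) := by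
            rw [hA, ← EReal.coe_add]
      _ ≤ f w + ((k * ‖w‖ ^ 2 : ℝ) : EReal) := hmin
      _ ≤ (((1 - t) * A + t * C : ℝ) : EReal) + ((k * ‖w‖ ^ 2 : ℝ) : EReal) :=
            add_le_add_left hfw _
      _ = (((1 - t) * A + t * C + k * ‖w‖ ^ 2 : ℝ) : EReal) := by rw [← EReal.coe_add]
    exact_mod_cast this
  have hw2 : ‖w‖ ^ 2 = (1 - t) ^ 2 * ‖y‖ ^ 2 + 2 * ((1 - t) * t) * ⟪y, z⟫ + t ^ 2 * ‖z‖ ^ 2 := by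
    rw [hwdef, ← real_inner_self_eq_norm_sq]
    simp only [inner_add_add_self, inner_smul_left, inner_smul_right, real_inner_self_eq_norm_sq]
    simp only [conj_trivial]
    rw [real_inner_comm y z]
    ring
  have hzy : ‖z - y‖ ^ 2 = ‖z‖ ^ 2 - 2 * ⟪z, y⟫ + ‖y‖ ^ 2 := by
    rw [← real_inner_self_eq_norm_sq]
    simp only [inner_sub_sub_self, real_inner_self_eq_norm_sq]
    rw [real_inner_comm y z]
    ring
  have hiy : ⟪y, z⟫ = ⟪z, y⟫ := real_inner_comm z y
  rw [hw2, hiy] at hkey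
  have hdiv : t * (A + k * ((2 - t) * ‖y‖ ^ 2) - 2 * k * ((1 - t) * ⟪z, y⟫)
      - k * (t * ‖z‖ ^ 2)) ≤ t * C := by nlinarith [hkey]
  have h2 : A + k * ((2 - t) * ‖y‖ ^ 2) - 2 * k * ((1 - t) * ⟪z, y⟫)
      - k * (t * ‖z‖ ^ 2) ≤ C := le_of_mul_le_mul_left hdiv ht0
  rw [hzy] at hte ⊢
  nlinarith [h2, hte]

/-- With `y_β = prox_{(β/(1−d)) f}(0)` (the unique minimizer of
`f + ((1−d)/(2β))‖·‖²`), if `0 < β ≤ β'`, then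
`‖y_{β'} − y_β‖² ≤ ((β' − β)/β') ⟨y_{β'}, y_{β'} − y_β⟩` and consequently
`‖y_{β'} − y_β‖ ≤ ((β' − β)/β') ‖y_{β'}‖`. -/
theorem stmt_7 {H : Type*} [NormedAddCommGroup H] [InnerProductSpace ℝ H] [CompleteSpace H]
    (f : H → EReal)
    (hbot : ∀ x, f x ≠ ⊥) (htop : ∃ x, f x ≠ ⊤)
    (hlsc : LowerSemicontinuous f)
    (hconv : ∀ x y : H, ∀ a b : ℝ, 0 ≤ a → 0 ≤ b → a + b = 1 →
      f (a • x + b • y) ≤ (a : EReal) * f x + (b : EReal) * f y)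
    (d : ℝ) (hd0 : 0 < d) (hd1 : d < 1)
    (β β' : ℝ) (hβ : 0 < β) (hββ' : β ≤ β')
    (yβ yβ' : H)
    (hyβ : ∀ z : H, f yβ + (((1 - d) / (2 * β) * ‖yβ‖ ^ 2 : ℝ) : EReal)
        ≤ f z + (((1 - d) / (2 * β) * ‖z‖ ^ 2 : ℝ) : EReal))
    (hyβ' : ∀ z : H, f yβ' + (((1 - d) / (2 * β') * ‖yβ'‖ ^ 2 : ℝ) : EReal)
        ≤ f z + (((1 - d) / (2 * β') * ‖z‖ ^ 2 : ℝ) : EReal)) :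
    ‖yβ' - yβ‖ ^ 2 ≤ (β' - β) / β' * (inner ℝ yβ' (yβ' - yβ) : ℝ)
      ∧ ‖yβ' - yβ‖ ≤ (β' - β) / β' * ‖yβ'‖ := by
  obtain ⟨z0, hz0T⟩ := htop
  have hβ' : 0 < β' := lt_of_lt_of_le hβ hββ'
  have hc : 0 < 1 - d := by linarith
  have hk : 0 < (1 - d) / (2 * β) := by positivity
  have hk' : 0 < (1 - d) / (2 * β') := by positivity
  have hz0 : f z0 = ((f z0).toReal : EReal) := (EReal.coe_toReal hz0T (hbot z0)).symm
  have hyβT : f yβ ≠ ⊤ := by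
    intro h
    have h1 := hyβ z0
    rw [h, hz0, ← EReal.coe_add, EReal.top_add_coe] at h1
    exact (EReal.coe_ne_top _) (top_le_iff.mp h1)
  have hyβ'T : f yβ' ≠ ⊤ := by
    intro h
    have h1 := hyβ' z0
    rw [h, hz0, ← EReal.coe_add, EReal.top_add_coe] at h1
    exact (EReal.coe_ne_top _) (top_le_iff.mp h1)
  set A := (f yβ).toReal
  set B := (f yβ').toReal
  have h1 := strong_min f hbot hconv hk hyβ hyβT hyβ'T
  have h2 := strong_min f hbot hconv hk' hyβ' hyβ'T hyβT
  rw [norm_sub_rev yβ yβ'] at h2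
  -- clear denominators
  have h1' : (1 - d) / (2 * β) * (‖yβ‖ ^ 2 + ‖yβ' - yβ‖ ^ 2 - ‖yβ'‖ ^ 2) ≤ B - A := by
    linarith [h1]
  have h2' : (1 - d) / (2 * β') * (‖yβ'‖ ^ 2 + ‖yβ' - yβ‖ ^ 2 - ‖yβ‖ ^ 2) ≤ A - B := by
    linarith [h2]
  rw [div_mul_eq_mul_div, div_le_iff₀ (by positivity : (0:ℝ) < 2 * β)] at h1'
  rw [div_mul_eq_mul_div, div_le_iff₀ (by positivity : (0:ℝ) < 2 * β')] at h2'
  have hD : ‖yβ' - yβ‖ ^ 2 = ‖yβ'‖ ^ 2 - 2 * ⟪yβ', yβ⟫ + ‖yβ‖ ^ 2 := by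
    rw [← real_inner_self_eq_norm_sq]
    simp only [inner_sub_sub_self, real_inner_self_eq_norm_sq]
    rw [real_inner_comm yβ yβ']
    ring
  have hP : (inner ℝ yβ' (yβ' - yβ) : ℝ) = ‖yβ'‖ ^ 2 - ⟪yβ', yβ⟫ := by
    rw [inner_sub_right, real_inner_self_eq_norm_sq]
  have hY : ‖yβ‖ ^ 2 = ‖yβ' - yβ‖ ^ 2 - ‖yβ'‖ ^ 2 + 2 * ⟪yβ', yβ⟫ := by linarith [hD]
  rw [hY] at h1' h2'
  have part1 : ‖yβ' - yβ‖ ^ 2 ≤ (β' - β) / β' * (inner ℝ yβ' (yβ' - yβ) : ℝ) := by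
    rw [hP, div_mul_eq_mul_div, le_div_iff₀ hβ']
    have hsum : (1 - d) * (‖yβ' - yβ‖ ^ 2 * β' - (β' - β) * (‖yβ'‖ ^ 2 - ⟪yβ', yβ⟫))
        ≤ (1 - d) * 0 := by
      nlinarith [mul_le_mul_of_nonneg_left h1' hβ'.le, mul_le_mul_of_nonneg_left h2' hβ.le]
    have := (mul_le_mul_iff_right₀ hc).mp hsum
    linarith
  refine ⟨part1, ?_⟩
  have hr : 0 ≤ (β' - β) / β' := div_nonneg (by linarith) hβ'.le
  have hcs : (inner ℝ yβ' (yβ' - yβ) : ℝ) ≤ ‖yβ'‖ * ‖yβ' - yβ‖ := real_inner_le_norm _ _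
  rw [hP] at part1 hcs
  by_cases hΔ : ‖yβ' - yβ‖ = 0
  · rw [hΔ]
    exact mul_nonneg hr (norm_nonneg _)
  · have hΔ0 : 0 < ‖yβ' - yβ‖ := lt_of_le_of_ne (norm_nonneg _) (Ne.symm hΔ)
    have : ‖yβ' - yβ‖ * ‖yβ' - yβ‖ ≤ ((β' - β) / β' * ‖yβ'‖) * ‖yβ' - yβ‖ := by
      nlinarith [part1, mul_le_mul_of_nonneg_left hcs hr]
    exact le_of_mul_le_mul_right this hΔ0
end

section
/- Let f : H → ℝ ∪ {+∞} be proper lsc convex with argmin f nonempty, d ∈ (0,1), and (β_k) a positive nondecreasing sequence with β_k → +∞. Define the proximal iterates x_{k+1} = prox_{β_k f}(d x_k) and y_k = prox_{(β_k/(1−d)) f}(0). Define E_k = β_k (φ_k(x_k) − φ_k(y_k)) + (λ/2)‖x_k − y_{k−1}‖² with φ_k = f + ((1−d)/(2β_k))‖·‖² and λ > 0. If E_k → 0 as k → ∞, then x_k converges strongly to x*, the minimum norm element of argmin f. -/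
lemma stmt10_aux {H : Type*} [NormedAddCommGroup H] [InnerProductSpace ℝ H]
    (u v : H) (hne : ‖u‖ = ‖v‖) (h3 : ‖v‖ ≤ 1/2 * ‖u + v‖) : u = v := by
  have hpar := parallelogram_law_with_norm ℝ u v
  rw [hne] at hpar
  have h4 : ‖u - v‖^2 ≤ 0 := by
    nlinarith [norm_nonneg (u + v), norm_nonneg v]
  have h5 : ‖u - v‖^2 = 0 := le_antisymm h4 (sq_nonneg _)
  have h6 : ‖u - v‖ = 0 := by
    exact pow_eq_zero_iff (two_ne_zero) |>.mp h5
  rw [← sub_eq_zero]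
  exact norm_eq_zero.mp h6

/-- For the proximal algorithm `x_{k+1} = prox_{β_k f}(d x_k)` with
`(β_k)` positive nondecreasing tending to `+∞`, `y_k = prox_{(β_k/(1−d)) f}(0)`,
and energy `E_k = β_k(φ_k(x_k) − φ_k(y_k)) + (λ/2)‖x_k − y_{k−1}‖²`
(`φ_k = f + ((1−d)/(2β_k))‖·‖²`): if `E_k → 0` then `x_k → x*` strongly, where `x*` is
the minimum norm element of `argmin f`. -/
theorem stmt_10 {H : Type*} [NormedAddCommGroup H] [InnerProductSpace ℝ H] [CompleteSpace H]
    (f : H → EReal)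
    (hbot : ∀ x, f x ≠ ⊥) (htop : ∃ x, f x ≠ ⊤)
    (hlsc : LowerSemicontinuous f)
    (hconv : ∀ x y : H, ∀ a b : ℝ, 0 ≤ a → 0 ≤ b → a + b = 1 →
      f (a • x + b • y) ≤ (a : EReal) * f x + (b : EReal) * f y)
    (d : ℝ) (hd0 : 0 < d) (hd1 : d < 1)
    (lam : ℝ) (hlam : 0 < lam)
    (β : ℕ → ℝ) (hβpos : ∀ k, 0 < β k) (hβmono : Monotone β)
    (hβtop : Filter.Tendsto β Filter.atTop Filter.atTop)
    (x y : ℕ → H)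
    -- `x_{k+1} = prox_{β_k f}(d x_k)`
    (hstep : ∀ k, ∀ z : H,
      f (x (k + 1)) + ((‖d • x k - x (k + 1)‖ ^ 2 / (2 * β k) : ℝ) : EReal)
        ≤ f z + ((‖d • x k - z‖ ^ 2 / (2 * β k) : ℝ) : EReal))
    -- `y_k = argmin φ_k = prox_{(β_k/(1−d)) f}(0)`
    (hy : ∀ k, ∀ z : H,
      f (y k) + (((1 - d) / (2 * β k) * ‖y k‖ ^ 2 : ℝ) : EReal)
        ≤ f z + (((1 - d) / (2 * β k) * ‖z‖ ^ 2 : ℝ) : EReal))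
    (E : ℕ → EReal)
    (hE : ∀ k, E k
      = (β k : EReal) *
          ((f (x k) + (((1 - d) / (2 * β k) * ‖x k‖ ^ 2 : ℝ) : EReal))
            - (f (y k) + (((1 - d) / (2 * β k) * ‖y k‖ ^ 2 : ℝ) : EReal)))
        + ((lam / 2 * ‖x k - y (k - 1)‖ ^ 2 : ℝ) : EReal))
    (hE0 : Filter.Tendsto E Filter.atTop (nhds (0 : EReal)))
    (xstar : H)
    (hxs_min : ∀ z, f xstar ≤ f z)
    (hxs_norm : ∀ z : H, (∀ w, f z ≤ f w) → ‖xstar‖ ≤ ‖z‖) :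
    Filter.Tendsto x Filter.atTop (nhds xstar) := by

  classical
  have hd' : (0:ℝ) < 1 - d := by linarith
  have hβ2 : ∀ k, (0:ℝ) < 2 * β k := fun k => by have := hβpos k; linarith
  have hcpos : ∀ k, 0 < (1 - d) / (2 * β k) := fun k => div_pos hd' (hβ2 k)
  have hcanti : ∀ j k, j ≤ k → (1 - d) / (2 * β k) ≤ (1 - d) / (2 * β j) := by
    intro j k hjk
    have h := hβmono hjk
    apply div_le_div_of_nonneg_left (le_of_lt hd') (hβ2 j)
    linarith
  have hc0 : Filter.Tendsto (fun k => (1 - d) / (2 * β k)) Filter.atTop (nhds 0) := by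
    apply Filter.Tendsto.div_atTop (tendsto_const_nhds)
    exact hβtop.const_mul_atTop (by norm_num)
  obtain ⟨z0, hz0top⟩ := htop
  have hFtop : f xstar ≠ ⊤ := by
    intro h
    exact hz0top (top_le_iff.mp (h ▸ hxs_min z0))
  set F : ℝ := (f xstar).toReal with hFdef
  have hFeq : f xstar = (F : EReal) := (EReal.coe_toReal hFtop (hbot xstar)).symm
  -- f (y k) is real
  have hyreal : ∀ k, f (y k) = (((f (y k)).toReal : ℝ) : EReal) := by
    intro k
    have h1 := hy k xstar
    rw [hFeq] at h1
    have hne : f (y k) ≠ ⊤ := by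
      intro htop'
      rw [htop', EReal.top_add_coe, ← EReal.coe_add, top_le_iff] at h1
      exact EReal.coe_ne_top _ h1
    exact (EReal.coe_toReal hne (hbot _)).symm
  set a : ℕ → ℝ := fun k => (f (y k)).toReal with hadef
  -- real version of the minimizing property of y k
  have hyR : ∀ k (z : H) (w : ℝ), f z = (w : EReal) →
      a k + (1 - d) / (2 * β k) * ‖y k‖^2 ≤ w + (1 - d) / (2 * β k) * ‖z‖^2 := by
    intro k z w hw
    have h1 := hy k z
    rw [hyreal k, hw, ← EReal.coe_add, ← EReal.coe_add, EReal.coe_le_coe_iff] at h1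
    exact h1
  have hFa : ∀ k, F ≤ a k := by
    intro k
    have h := hxs_min (y k)
    rw [hFeq, hyreal k, EReal.coe_le_coe_iff] at h
    exact h
  have hybd : ∀ k, ‖y k‖ ≤ ‖xstar‖ := by
    intro k
    have h1 := hyR k xstar F hFeq
    have h2 := hFa k
    have hc := hcpos k
    have h3 : ‖y k‖^2 ≤ ‖xstar‖^2 := le_of_mul_le_mul_left (by linarith) hc
    nlinarith [norm_nonneg (y k), norm_nonneg xstar]
  -- strong convexity at the minimizer
  have hSC : ∀ k (z : H) (w : ℝ), f z = (w : EReal) →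
      a k + (1 - d) / (2 * β k) * ‖y k‖^2 + (1 - d) / (2 * β k) / 2 * ‖z - y k‖^2
        ≤ w + (1 - d) / (2 * β k) * ‖z‖^2 := by
    intro k z w hw
    have hmid := hconv (y k) z (1/2) (1/2) (by norm_num) (by norm_num) (by norm_num)
    rw [hyreal k, hw] at hmid
    have hmid' : f ((1/2:ℝ) • y k + (1/2:ℝ) • z) ≤ ((a k / 2 + w / 2 : ℝ) : EReal) := by
      refine le_trans hmid (le_of_eq ?_)
      norm_cast
      ring
    have hmtop : f ((1/2:ℝ) • y k + (1/2:ℝ) • z) ≠ ⊤ :=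
      fun h => EReal.coe_ne_top _ (top_le_iff.mp (h ▸ hmid'))
    set wm : ℝ := (f ((1/2:ℝ) • y k + (1/2:ℝ) • z)).toReal with hwmdef
    have hwm : f ((1/2:ℝ) • y k + (1/2:ℝ) • z) = (wm : EReal) :=
      (EReal.coe_toReal hmtop (hbot _)).symm
    have hwmle : wm ≤ a k / 2 + w / 2 := by
      rw [hwm, EReal.coe_le_coe_iff] at hmid'
      exact hmid'
    have h1 := hyR k ((1/2:ℝ) • y k + (1/2:ℝ) • z) wm hwm
    have hmn : ‖(1/2:ℝ) • y k + (1/2:ℝ) • z‖ = 1/2 * ‖y k + z‖ := by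
      rw [← smul_add, norm_smul, Real.norm_eq_abs, abs_of_nonneg (by norm_num : (0:ℝ) ≤ 1/2)]
    have hpar := parallelogram_law_with_norm ℝ (y k) z
    have hrev : ‖y k - z‖ = ‖z - y k‖ := norm_sub_rev _ _
    rw [hmn] at h1
    have hc := hcpos k
    have hpar2 : ‖y k + z‖^2 = 2*‖y k‖^2 + 2*‖z‖^2 - ‖z - y k‖^2 := by
      rw [← hrev]
      linarith [hpar]
    have hsq : (1/2 * ‖y k + z‖)^2 = (2*‖y k‖^2 + 2*‖z‖^2 - ‖z - y k‖^2)/4 := by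
      rw [mul_pow, hpar2]
      ring
    rw [hsq] at h1
    linarith [h1, hwmle]
  set n : ℕ → ℝ := fun k => ‖y k‖^2 with hndef
  have hkey : ∀ j k, j ≤ k →
      (1 - d) / (2 * β j) / 2 * ‖y k - y j‖^2
        ≤ ((1 - d) / (2 * β j) - (1 - d) / (2 * β k)) * (n k - n j) := by
    intro j k hjk
    have h1 := hSC j (y k) (a k) (hyreal k)
    have h2 := hyR k (y j) (a j) (hyreal j)
    simp only [hndef]
    linarith [h1, h2]
  have hnmono : ∀ j k, j ≤ k → n j ≤ n k := by
    intro j k hjk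
    by_contra hlt
    push_neg at hlt
    have h := hkey j k hjk
    rcases eq_or_lt_of_le (hcanti j k hjk) with hceq | hclt
    · have hs : ‖y k - y j‖^2 ≤ 0 := by
        rw [hceq] at h
        nlinarith [hcpos j]
      have hz : ‖y k - y j‖ = 0 := by
        nlinarith [norm_nonneg (y k - y j)]
      have : y k = y j := by
        rw [← sub_eq_zero]
        exact norm_eq_zero.mp hz
      simp only [hndef, this] at hlt
      exact lt_irrefl _ hlt
    · nlinarith [hcpos j, sq_nonneg (‖y k - y j‖)]
  have hnbd : ∀ k, n k ≤ ‖xstar‖^2 := by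
    intro k
    simp only [hndef]
    exact pow_le_pow_left₀ (norm_nonneg _) (hybd k) 2
  have hnmono' : Monotone n := fun j k h => hnmono j k h
  have hbdd : BddAbove (Set.range n) := by
    refine ⟨‖xstar‖^2, ?_⟩
    rintro _ ⟨k, rfl⟩
    exact hnbd k
  have hnlim := tendsto_atTop_ciSup hnmono' hbdd
  set L : ℝ := ⨆ k, n k with hLdef
  have hnleL : ∀ k, n k ≤ L := fun k => le_ciSup hbdd k
  have hLle : L ≤ ‖xstar‖^2 := ciSup_le hnbd
  -- y is Cauchy
  have hdiff : ∀ j k, j ≤ k → ‖y k - y j‖^2 ≤ 2 * (L - n j) := by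
    intro j k hjk
    have h := hkey j k hjk
    have hcj := hcpos j
    have hck := hcpos k
    have hmono := hnmono j k hjk
    have hL := hnleL k
    have hfac : ((1 - d) / (2 * β j) - (1 - d) / (2 * β k)) * (n k - n j)
        ≤ (1 - d) / (2 * β j) * (n k - n j) := by
      apply mul_le_mul_of_nonneg_right _ (by linarith)
      linarith
    have h2 : (1 - d) / (2 * β j) * ‖y k - y j‖^2 ≤ (1 - d) / (2 * β j) * (2 * (n k - n j)) := by
      nlinarith
    have := le_of_mul_le_mul_left h2 hcj
    linarith
  have hCauchy : CauchySeq y := by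
    rw [Metric.cauchySeq_iff']
    intro ε hε
    have hlt : L - ε^2/2 < L := by nlinarith
    have hev := hnlim.eventually (lt_mem_nhds hlt)
    obtain ⟨N, hN⟩ := Filter.eventually_atTop.mp hev
    refine ⟨N, fun k hk => ?_⟩
    have h1 := hdiff N k hk
    have h2 := hN N le_rfl
    rw [dist_eq_norm]
    nlinarith [norm_nonneg (y k - y N)]
  obtain ⟨yl, hyl⟩ := cauchySeq_tendsto_of_complete hCauchy
  have hn2 : Filter.Tendsto n Filter.atTop (nhds (‖yl‖^2)) := hyl.norm.pow 2
  have hLeq : ‖yl‖^2 = L := tendsto_nhds_unique hn2 hnlim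
  -- yl is a minimizer
  have hylmin : f yl ≤ (F : EReal) := by
    by_contra hgt
    push_neg at hgt
    obtain ⟨c', hc1, hc2⟩ := exists_between hgt
    have hc'top : c' ≠ ⊤ := (hc2.trans_le le_top).ne
    have hc'bot : c' ≠ ⊥ := ((EReal.bot_lt_coe F).trans hc1).ne'
    set r : ℝ := c'.toReal with hrdef
    have hc'eq : c' = (r : EReal) := (EReal.coe_toReal hc'top hc'bot).symm
    have hFr : F < r := by
      rw [hc'eq, EReal.coe_lt_coe_iff] at hc1
      exact hc1
    have hev1 : ∀ᶠ k in Filter.atTop, c' < f (y k) := hyl.eventually (hlsc yl c' hc2)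
    have hc0' : Filter.Tendsto (fun k => (1 - d) / (2 * β k) * ‖xstar‖^2)
        Filter.atTop (nhds 0) := by
      have h := hc0.mul_const (‖xstar‖^2)
      rw [zero_mul] at h
      exact h
    have hev2 : ∀ᶠ k in Filter.atTop, (1 - d) / (2 * β k) * ‖xstar‖^2 < r - F :=
      hc0'.eventually (gt_mem_nhds (by linarith))
    obtain ⟨k, hk1, hk2⟩ := (hev1.and hev2).exists
    rw [hc'eq, hyreal k, EReal.coe_lt_coe_iff] at hk1
    have h1 := hyR k xstar F hFeq
    have hnk : 0 ≤ (1 - d) / (2 * β k) * ‖y k‖^2 :=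
      mul_nonneg (le_of_lt (hcpos k)) (sq_nonneg _)
    linarith
  have hylargmin : ∀ z, f yl ≤ f z := by
    intro z
    refine hylmin.trans ?_
    rw [← hFeq]
    exact hxs_min z
  -- yl = xstar
  have hylxs : yl = xstar := by
    have h1 : ‖xstar‖ ≤ ‖yl‖ := hxs_norm yl hylargmin
    have h2 : ‖yl‖ ≤ ‖xstar‖ := by
      have : ‖yl‖^2 ≤ ‖xstar‖^2 := by rw [hLeq]; exact hLle
      nlinarith [norm_nonneg yl, norm_nonneg xstar]
    have hne : ‖yl‖ = ‖xstar‖ := le_antisymm h2 h1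
    have hyltop : f yl ≠ ⊤ := fun h => EReal.coe_ne_top _ (top_le_iff.mp (h ▸ hylmin))
    set G : ℝ := (f yl).toReal with hGdef
    have hGeq : f yl = (G : EReal) := (EReal.coe_toReal hyltop (hbot _)).symm
    have hGF : G ≤ F := by
      rw [hGeq, EReal.coe_le_coe_iff] at hylmin
      exact hylmin
    have hmid := hconv yl xstar (1/2) (1/2) (by norm_num) (by norm_num) (by norm_num)
    rw [hGeq, hFeq] at hmid
    have hfm : f ((1/2:ℝ) • yl + (1/2:ℝ) • xstar) ≤ (F : EReal) := by
      refine hmid.trans ?_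
      rw [← EReal.coe_mul, ← EReal.coe_mul, ← EReal.coe_add, EReal.coe_le_coe_iff]
      linarith
    have hm_argmin : ∀ z, f ((1/2:ℝ) • yl + (1/2:ℝ) • xstar) ≤ f z := by
      intro z
      refine hfm.trans ?_
      rw [← hFeq]
      exact hxs_min z
    have h3 : ‖xstar‖ ≤ ‖(1/2:ℝ) • yl + (1/2:ℝ) • xstar‖ := hxs_norm _ hm_argmin
    have hmn : ‖(1/2:ℝ) • yl + (1/2:ℝ) • xstar‖ = 1/2 * ‖yl + xstar‖ := by
      rw [← smul_add, norm_smul, Real.norm_eq_abs, abs_of_nonneg (by norm_num : (0:ℝ) ≤ 1/2)]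
    rw [hmn] at h3
    exact stmt10_aux yl xstar hne h3
  rw [hylxs] at hyl
  have hyshift : Filter.Tendsto (fun k => y (k - 1)) Filter.atTop (nhds xstar) :=
    hyl.comp (Filter.tendsto_sub_atTop_nat 1)
  -- the second term of the energy tends to 0
  have hT1 : ∀ k, (0:EReal) ≤ (β k : EReal) *
      ((f (x k) + (((1 - d) / (2 * β k) * ‖x k‖ ^ 2 : ℝ) : EReal))
        - (f (y k) + (((1 - d) / (2 * β k) * ‖y k‖ ^ 2 : ℝ) : EReal))) := by
    intro k
    refine mul_nonneg (by exact_mod_cast le_of_lt (hβpos k)) ?_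
    have hB : f (y k) + (((1 - d) / (2 * β k) * ‖y k‖ ^ 2 : ℝ) : EReal)
        = ((a k + (1 - d) / (2 * β k) * ‖y k‖ ^ 2 : ℝ) : EReal) := by
      rw [hyreal k, ← EReal.coe_add]
    rw [hB]
    rw [EReal.le_sub_iff_add_le (Or.inl (EReal.coe_ne_bot _)) (Or.inl (EReal.coe_ne_top _)),
      zero_add]
    rw [← hB]
    exact hy k (x k)
  have hEge : ∀ k, ((lam / 2 * ‖x k - y (k - 1)‖ ^ 2 : ℝ) : EReal) ≤ E k := by
    intro k
    rw [hE k]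
    calc ((lam / 2 * ‖x k - y (k - 1)‖ ^ 2 : ℝ) : EReal)
        = 0 + ((lam / 2 * ‖x k - y (k - 1)‖ ^ 2 : ℝ) : EReal) := (zero_add _).symm
      _ ≤ _ := add_le_add (hT1 k) le_rfl
  have h0le : ∀ k, (0:EReal) ≤ ((lam / 2 * ‖x k - y (k - 1)‖ ^ 2 : ℝ) : EReal) := by
    intro k
    exact_mod_cast (mul_nonneg (by positivity) (sq_nonneg _) : (0:ℝ) ≤ lam / 2 * ‖x k - y (k - 1)‖ ^ 2)
  have hcoe : Filter.Tendsto (fun k => ((lam / 2 * ‖x k - y (k - 1)‖ ^ 2 : ℝ) : EReal))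
      Filter.atTop (nhds (0 : EReal)) :=
    tendsto_of_tendsto_of_tendsto_of_le_of_le tendsto_const_nhds hE0 h0le hEge
  have hreal : Filter.Tendsto (fun k => lam / 2 * ‖x k - y (k - 1)‖ ^ 2)
      Filter.atTop (nhds 0) := by
    rw [← EReal.coe_zero] at hcoe
    exact EReal.tendsto_coe.mp hcoe
  have hs0 : Filter.Tendsto (fun k => ‖x k - y (k - 1)‖ ^ 2) Filter.atTop (nhds 0) := by
    have h2 := hreal.const_mul (2 / lam)
    rw [mul_zero] at h2
    have heq : (fun k => ‖x k - y (k - 1)‖ ^ 2)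
        = fun k => 2 / lam * (lam / 2 * ‖x k - y (k - 1)‖ ^ 2) := by
      funext k
      field_simp
    rw [heq]
    exact h2
  have hn0 : Filter.Tendsto (fun k => ‖x k - y (k - 1)‖) Filter.atTop (nhds 0) := by
    have h2 := (Real.continuous_sqrt.tendsto 0).comp hs0
    rw [Real.sqrt_zero] at h2
    have heq : (fun k => ‖x k - y (k - 1)‖)
        = fun k => Real.sqrt (‖x k - y (k - 1)‖ ^ 2) := by
      funext k
      rw [Real.sqrt_sq (norm_nonneg _)]
    rw [heq]
    exact h2
  have hv : Filter.Tendsto (fun k => x k - y (k - 1)) Filter.atTop (nhds 0) :=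
    tendsto_zero_iff_norm_tendsto_zero.mpr hn0
  have hfin := hv.add hyshift
  rw [zero_add] at hfin
  have heq : (fun k => x k - y (k - 1) + y (k - 1)) = x := by
    funext k
    abel
  rw [heq] at hfin
  exact hfin
end

section
/- With the setting of the proximal algorithm x_{k+1} = prox_{β_k f}(d x_k), d ∈ (0,1), φ_k = f + ((1−d)/(2β_k))‖·‖², y_k = argmin φ_k, λ > 0, and E_k = β_k(φ_k(x_k) − φ_k(y_k)) + (λ/2)‖x_k − y_{k−1}‖², one has for all k: f(x_k) − min f ≤ E_k/β_k + ((1−d)/(2β_k))‖x*‖² and ‖x_k − y_k‖² ≤ 2E_k/(1−d), where x* is the minimum norm minimizer of f. -/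
/-- For the proximal algorithm `x_{k+1} = prox_{β_k f}(d x_k)`,
with `φ_k = f + ((1−d)/(2β_k))‖·‖²`, `y_k = argmin φ_k`,
`E_k = β_k(φ_k(x_k) − φ_k(y_k)) + (λ/2)‖x_k − y_{k−1}‖²`, and `x*` the minimum norm
minimizer of `f`, one has for all `k`:
`f(x_k) − min f ≤ E_k/β_k + ((1−d)/(2β_k))‖x*‖²` and `‖x_k − y_k‖² ≤ 2E_k/(1−d)`. -/
theorem stmt_11 {H : Type*} [NormedAddCommGroup H] [InnerProductSpace ℝ H] [CompleteSpace H]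
    (f : H → EReal)
    (hbot : ∀ x, f x ≠ ⊥) (htop : ∃ x, f x ≠ ⊤)
    (hlsc : LowerSemicontinuous f)
    (hconv : ∀ x y : H, ∀ a b : ℝ, 0 ≤ a → 0 ≤ b → a + b = 1 →
      f (a • x + b • y) ≤ (a : EReal) * f x + (b : EReal) * f y)
    (d : ℝ) (hd0 : 0 < d) (hd1 : d < 1)
    (lam : ℝ) (hlam : 0 < lam)
    (β : ℕ → ℝ) (hβpos : ∀ k, 0 < β k)
    (x y : ℕ → H)
    (hstep : ∀ k, ∀ z : H,
      f (x (k + 1)) + ((‖d • x k - x (k + 1)‖ ^ 2 / (2 * β k) : ℝ) : EReal)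
        ≤ f z + ((‖d • x k - z‖ ^ 2 / (2 * β k) : ℝ) : EReal))
    (hy : ∀ k, ∀ z : H,
      f (y k) + (((1 - d) / (2 * β k) * ‖y k‖ ^ 2 : ℝ) : EReal)
        ≤ f z + (((1 - d) / (2 * β k) * ‖z‖ ^ 2 : ℝ) : EReal))
    (E : ℕ → EReal)
    (hE : ∀ k, E k
      = (β k : EReal) *
          ((f (x k) + (((1 - d) / (2 * β k) * ‖x k‖ ^ 2 : ℝ) : EReal))
            - (f (y k) + (((1 - d) / (2 * β k) * ‖y k‖ ^ 2 : ℝ) : EReal)))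
        + ((lam / 2 * ‖x k - y (k - 1)‖ ^ 2 : ℝ) : EReal))
    (xstar : H)
    (hxs_min : ∀ z, f xstar ≤ f z)
    (hxs_norm : ∀ z : H, (∀ w, f z ≤ f w) → ‖xstar‖ ≤ ‖z‖) :
    ∀ k, f (x k) - f xstar
          ≤ E k / (β k : EReal) + (((1 - d) / (2 * β k) * ‖xstar‖ ^ 2 : ℝ) : EReal)
      ∧ ((‖x k - y k‖ ^ 2 : ℝ) : EReal) ≤ ((2 / (1 - d) : ℝ) : EReal) * E k := by
  classical
  obtain ⟨z0, hz0⟩ := htop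
  have hxs_ne_top : f xstar ≠ ⊤ := ne_top_of_le_ne_top hz0 (hxs_min z0)
  obtain ⟨m, hm⟩ : ∃ m : ℝ, f xstar = (m : ℝ) :=
    ⟨(f xstar).toReal, (EReal.coe_toReal hxs_ne_top (hbot xstar)).symm⟩
  intro k
  set c : ℝ := (1 - d) / (2 * β k) with hc_def
  have hβ := hβpos k
  have hc : 0 < c := div_pos (by linarith) (by linarith)
  -- f (y k) is a real number
  have hyk_ne_top : f (y k) ≠ ⊤ := by
    intro h
    have := hy k xstar
    rw [h, hm, EReal.top_add_coe, ← EReal.coe_add] at this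
    exact (EReal.coe_ne_top _) (top_le_iff.mp this)
  obtain ⟨b, hb⟩ : ∃ b : ℝ, f (y k) = (b : ℝ) :=
    ⟨(f (y k)).toReal, (EReal.coe_toReal hyk_ne_top (hbot (y k))).symm⟩
  rcases eq_or_ne (f (x k)) ⊤ with hx_top | hx_ne_top
  · -- f (x k) = ⊤ : then E k = ⊤
    have hEk : E k = ⊤ := by
      rw [hE k, hx_top, hb, EReal.top_add_coe, ← EReal.coe_add, EReal.top_sub_coe,
        EReal.coe_mul_top_of_pos hβ, EReal.top_add_coe]
    constructor
    · have : E k / (β k : EReal) = ⊤ := by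
        rw [hEk]
        exact EReal.top_div_of_pos_ne_top (by exact_mod_cast hβ) (EReal.coe_ne_top _)
      rw [this, EReal.top_add_coe]
      exact le_top
    · rw [hEk, EReal.coe_mul_top_of_pos (div_pos two_pos (by linarith))]
      exact le_top
  · -- f (x k) is a real number
    obtain ⟨a, ha⟩ : ∃ a : ℝ, f (x k) = (a : ℝ) :=
      ⟨(f (x k)).toReal, (EReal.coe_toReal hx_ne_top (hbot (x k))).symm⟩
    set w : H := x k - y k with hw_def
    set X : ℝ := ‖x k‖ ^ 2
    set Y : ℝ := ‖y k‖ ^ 2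
    set W : ℝ := ‖w‖ ^ 2 with hW_def
    set P : ℝ := inner ℝ (y k) w with hP_def
    have hW0 : 0 ≤ W := sq_nonneg _
    have hX0 : 0 ≤ X := sq_nonneg _
    -- norm identity : X = Y + 2P + W
    have hXid : X = Y + 2 * P + W := by
      have hxk : x k = y k + w := by simp [hw_def]
      rw [show X = ‖y k + w‖ ^ 2 by rw [← hxk], norm_add_sq_real]
    -- from hy k xstar
    have hbm : b + c * Y ≤ m + c * ‖xstar‖ ^ 2 := by
      have := hy k xstar
      rw [hb, hm, ← EReal.coe_add, ← EReal.coe_add] at this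
      exact_mod_cast this
    -- from hy k (x k)
    have hbx : b + c * Y ≤ a + c * X := by
      have := hy k (x k)
      rw [hb, ha, ← EReal.coe_add, ← EReal.coe_add] at this
      exact_mod_cast this
    -- strong convexity step: key inequality for each t ∈ (0,1]
    have key : ∀ t : ℝ, 0 < t → t ≤ 1 → 0 ≤ t * (a - b) + c * (2 * t * P + t ^ 2 * W) := by
      intro t ht0 ht1
      have hmid : t • (x k) + (1 - t) • (y k) = y k + t • w := by
        rw [hw_def]; module
      have hmn : ‖y k + t • w‖ ^ 2 = Y + 2 * t * P + t ^ 2 * W := by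
        rw [norm_add_sq_real, real_inner_smul_right, norm_smul, hP_def, hW_def]
        rw [Real.norm_eq_abs, abs_of_pos ht0]
        ring
      have hcv := hconv (x k) (y k) t (1 - t) (le_of_lt ht0) (by linarith) (by ring)
      rw [ha, hb, ← EReal.coe_mul, ← EReal.coe_mul, ← EReal.coe_add, hmid] at hcv
      have hmin := hy k (y k + t • w)
      rw [hb] at hmin
      have chain : ((b + c * Y : ℝ) : EReal)
          ≤ ((t * a + (1 - t) * b + c * (Y + 2 * t * P + t ^ 2 * W) : ℝ) : EReal) := by
        calc ((b + c * Y : ℝ) : EReal) = (b : EReal) + ((c * Y : ℝ) : EReal) := by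
              rw [← EReal.coe_add]
          _ ≤ f (y k + t • w) + ((c * ‖y k + t • w‖ ^ 2 : ℝ) : EReal) := hmin
          _ ≤ ((t * a + (1 - t) * b : ℝ) : EReal) + ((c * ‖y k + t • w‖ ^ 2 : ℝ) : EReal) := by
              exact add_le_add_left hcv _
          _ = ((t * a + (1 - t) * b + c * (Y + 2 * t * P + t ^ 2 * W) : ℝ) : EReal) := by
              rw [hmn, ← EReal.coe_add]
      have := EReal.coe_le_coe_iff.mp chain
      nlinarith
    -- limit t → 0⁺ : s := a - b + 2cP ≥ 0
    have hs : 0 ≤ a - b + 2 * c * P := by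
      by_contra hneg
      push_neg at hneg
      set s : ℝ := a - b + 2 * c * P with hs_def
      have hW_pos : 0 < W := by
        rcases lt_or_eq_of_le hW0 with h | h
        · exact h
        · exfalso; have := key 1 one_pos le_rfl; nlinarith
      set t : ℝ := min 1 (-s / (2 * c * W)) with ht_def
      have ht0 : 0 < t := lt_min one_pos (div_pos (by linarith) (by nlinarith))
      have ht1 : t ≤ 1 := min_le_left _ _
      have htW : c * t * W ≤ -s / 2 := by
        have h2 : t ≤ -s / (2 * c * W) := min_le_right _ _
        have : c * t * W ≤ c * (-s / (2 * c * W)) * W :=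
          mul_le_mul_of_nonneg_right (mul_le_mul_of_nonneg_left h2 hc.le) hW0
        calc c * t * W ≤ c * (-s / (2 * c * W)) * W := this
          _ = -s / 2 := by field_simp
      have := key t ht0 ht1
      nlinarith
    -- E k as a real number
    set L : ℝ := lam / 2 * ‖x k - y (k - 1)‖ ^ 2 with hL_def
    have hL0 : 0 ≤ L := by positivity
    have hEk : E k = ((β k * ((a + c * X) - (b + c * Y)) + L : ℝ) : EReal) := by
      rw [hE k, ha, hb, ← EReal.coe_add, ← EReal.coe_add, ← EReal.coe_sub,
        ← EReal.coe_mul, ← EReal.coe_add]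
    set Er : ℝ := β k * ((a + c * X) - (b + c * Y)) + L with hEr_def
    have hdiv : E k / (β k : EReal) = ((Er / β k : ℝ) : EReal) := by
      rw [hEk, EReal.coe_div]
    constructor
    · rw [ha, hm, hdiv, ← EReal.coe_sub, ← EReal.coe_add]
      rw [EReal.coe_le_coe_iff]
      have h1 : (a + c * X) - (b + c * Y) ≤ Er / β k := by
        rw [hEr_def]
        rw [le_div_iff₀ hβ]
        have hcm : (a + c * X - (b + c * Y)) * β k = β k * (a + c * X - (b + c * Y)) :=
          mul_comm _ _
        linarith
      have hcX : 0 ≤ c * X := mul_nonneg hc.le hX0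
      linarith
    · rw [hEk, ← EReal.coe_mul, hW_def, EReal.coe_le_coe_iff]
      -- W ≤ (2/(1-d)) * Er
      have hcβ : c * β k = (1 - d) / 2 := by
        rw [hc_def]; field_simp
      have hphi : c * W ≤ (a + c * X) - (b + c * Y) := by
        have hid : c * X = c * Y + 2 * c * P + c * W := by rw [hXid]; ring
        linarith
      have hEr_ge : (1 - d) / 2 * W ≤ Er := by
        have h3 : β k * (c * W) ≤ β k * ((a + c * X) - (b + c * Y)) :=
          mul_le_mul_of_nonneg_left hphi hβ.le
        have h4 : β k * (c * W) = (1 - d) / 2 * W := by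
          rw [show β k * (c * W) = c * β k * W by ring, hcβ]
        linarith
      rw [div_mul_eq_mul_div, le_div_iff₀ (by linarith : (0:ℝ) < 1 - d), ← hW_def]
      linarith [hEr_ge]
end

section
/- Let f : H → ℝ ∪ {+∞} be proper lsc convex, d ∈ (0,1), β > 0, φ(x) = f(x) + ((1−d)/(2β))‖x‖², and let x⁺ = prox_{β f}(d x) for given x ∈ H (equivalently x⁺ + β ∂f(x⁺) ∋ d x, i.e. −(d/β)(x⁺ − x) ∈ ∂φ(x⁺)). Then β(φ(x⁺) − φ(x)) ≤ −((1+d)/2)‖x⁺ − x‖². -/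
lemma comb_norm {H : Type*} [NormedAddCommGroup H] [InnerProductSpace ℝ H] (u v : H) (t : ℝ) :
    ‖(1-t) • u + t • v‖^2 = (1-t)*‖u‖^2 + t*‖v‖^2 - t*(1-t)*‖u-v‖^2 := by
  simp only [← real_inner_self_eq_norm_sq, inner_add_left, inner_add_right,
    inner_sub_left, inner_sub_right, real_inner_smul_left, real_inner_smul_right,
    real_inner_comm u v]
  ring

/-- With `φ = f + ((1−d)/(2β))‖·‖²` and `x⁺ = prox_{β f}(d x)`,
one has `β(φ(x⁺) − φ(x)) ≤ −((1+d)/2)‖x⁺ − x‖²`. -/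
theorem stmt_12 {H : Type*} [NormedAddCommGroup H] [InnerProductSpace ℝ H] [CompleteSpace H]
    (f : H → EReal)
    (hbot : ∀ x, f x ≠ ⊥) (htop : ∃ x, f x ≠ ⊤)
    (hlsc : LowerSemicontinuous f)
    (hconv : ∀ x y : H, ∀ a b : ℝ, 0 ≤ a → 0 ≤ b → a + b = 1 →
      f (a • x + b • y) ≤ (a : EReal) * f x + (b : EReal) * f y)
    (d : ℝ) (hd0 : 0 < d) (hd1 : d < 1)
    (β : ℝ) (hβ : 0 < β)
    (x xp : H)
    -- `x⁺ = prox_{β f}(d x)` : x⁺ minimizes `ξ ↦ f ξ + ‖d x − ξ‖²/(2β)`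
    (hxp : ∀ z : H, f xp + ((‖d • x - xp‖ ^ 2 / (2 * β) : ℝ) : EReal)
        ≤ f z + ((‖d • x - z‖ ^ 2 / (2 * β) : ℝ) : EReal)) :
    (β : EReal) *
        ((f xp + (((1 - d) / (2 * β) * ‖xp‖ ^ 2 : ℝ) : EReal))
          - (f x + (((1 - d) / (2 * β) * ‖x‖ ^ 2 : ℝ) : EReal)))
      ≤ ((-((1 + d) / 2) * ‖xp - x‖ ^ 2 : ℝ) : EReal) := by
  -- f xp is finite
  obtain ⟨z0, hz0⟩ := htop
  have hfxp_top : f xp ≠ ⊤ := by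
    intro h
    have h1 := hxp z0
    rw [h, EReal.top_add_of_ne_bot (EReal.coe_ne_bot _)] at h1
    exact absurd h1 (not_le.mpr (EReal.add_lt_top hz0 (EReal.coe_ne_top _)))
  set r : ℝ := (f xp).toReal with hr
  have hfr : f xp = (r : EReal) := (EReal.coe_toReal hfxp_top (hbot xp)).symm
  by_cases hfx : f x = ⊤
  · rw [hfx, EReal.top_add_of_ne_bot (EReal.coe_ne_bot _), EReal.sub_top,
      EReal.coe_mul_bot_of_pos hβ]
    exact bot_le
  set s : ℝ := (f x).toReal with hs
  have hfs : f x = (s : EReal) := (EReal.coe_toReal hfx (hbot x)).symm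
  -- key real inequality from prox optimality + convexity, for each t ∈ (0,1]
  set P : ℝ := ‖d • x - xp‖ ^ 2
  set X : ℝ := ‖d • x - x‖ ^ 2
  set D : ℝ := ‖xp - x‖ ^ 2
  have key : ∀ t : ℝ, 0 < t → t ≤ 1 →
      r ≤ s + (X - P) / (2 * β) - (1 - t) * D / (2 * β) := by
    intro t ht0 ht1
    have h1t : (0:ℝ) ≤ 1 - t := by linarith
    have hcv := hconv xp x (1 - t) t h1t ht0.le (by ring)
    have hpx := hxp ((1 - t) • xp + t • x)
    rw [hfr, hfs] at hcv
    rw [hfr] at hpx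
    have hQ : ‖d • x - ((1 - t) • xp + t • x)‖ ^ 2
        = (1 - t) * P + t * X - t * (1 - t) * D := by
      have : d • x - ((1 - t) • xp + t • x) = (1 - t) • (d • x - xp) + t • (d • x - x) := by
        rw [smul_sub, smul_sub]
        module
      rw [this, comb_norm]
      have : (d • x - xp) - (d • x - x) = -(xp - x) := by abel
      rw [this, norm_neg]
    rw [hQ] at hpx
    have hchain : ((r : EReal) + ((P / (2 * β) : ℝ) : EReal))
        ≤ (((1 - t) * r + t * s + ((1 - t) * P + t * X - t * (1 - t) * D) / (2 * β) : ℝ) : EReal) := by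
      refine hpx.trans ?_
      calc f ((1 - t) • xp + t • x) + ((((1 - t) * P + t * X - t * (1 - t) * D) / (2 * β) : ℝ) : EReal)
          ≤ ((1 - t : ℝ) : EReal) * (r : EReal) + (t : EReal) * (s : EReal)
              + ((((1 - t) * P + t * X - t * (1 - t) * D) / (2 * β) : ℝ) : EReal) := by
            exact add_le_add_left hcv _
        _ = (((1 - t) * r + t * s + ((1 - t) * P + t * X - t * (1 - t) * D) / (2 * β) : ℝ) : EReal) := by
            norm_cast
    rw [← EReal.coe_add] at hchain
    have hre : r + P / (2 * β) ≤ (1 - t) * r + t * s + ((1 - t) * P + t * X - t * (1 - t) * D) / (2 * β) :=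
      EReal.coe_le_coe_iff.mp hchain
    have h2β : (0:ℝ) < 2 * β := by linarith
    have hsplit : ((1 - t) * P + t * X - t * (1 - t) * D) / (2 * β)
        = (1-t)*(P/(2*β)) + t*(X/(2*β)) - t*(1-t)*(D/(2*β)) := by ring
    rw [hsplit] at hre
    have hgoal : s + (X - P) / (2 * β) - (1 - t) * D / (2 * β)
        = s + X/(2*β) - P/(2*β) - (1-t)*(D/(2*β)) := by ring
    rw [hgoal]
    have h' : t * r ≤ t * (s + X/(2*β) - P/(2*β) - (1-t)*(D/(2*β))) := by
      linear_combination hre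
    exact le_of_mul_le_mul_left h' ht0
  -- limit t → 0 : r ≤ s + (X - P)/(2β) - D/(2β)
  have hD0 : 0 ≤ D := sq_nonneg _
  have h2β : (0:ℝ) < 2 * β := by linarith
  have hlim : r ≤ s + (X - P) / (2 * β) - D / (2 * β) := by
    refine le_of_forall_pos_le_add fun ε hε => ?_
    rcases eq_or_lt_of_le hD0 with hD | hD
    · have := key 1 one_pos le_rfl
      simp at this
      have hD' : D / (2 * β) = 0 := by rw [← hD]; simp
      linarith [this, hD']
    · set t := min 1 (ε * (2 * β) / D) with htdef
      have ht0 : 0 < t := lt_min one_pos (by positivity)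
      have ht1 : t ≤ 1 := min_le_left _ _
      have := key t ht0 ht1
      have htD : t * D / (2 * β) ≤ ε := by
        have : t ≤ ε * (2 * β) / D := min_le_right _ _
        rw [div_le_iff₀ h2β]
        calc t * D ≤ (ε * (2 * β) / D) * D := by nlinarith
          _ = ε * (2 * β) := by field_simp
      have expand : (1 - t) * D / (2 * β) = D / (2 * β) - t * D / (2 * β) := by ring
      linarith [this, htD]
  -- now finish: reduce goal to reals
  rw [hfr, hfs]
  have goalcast : (β : EReal) *
        (((r : EReal) + (((1 - d) / (2 * β) * ‖xp‖ ^ 2 : ℝ) : EReal))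
          - ((s : EReal) + (((1 - d) / (2 * β) * ‖x‖ ^ 2 : ℝ) : EReal)))
      = ((β * ((r + (1 - d) / (2 * β) * ‖xp‖ ^ 2) - (s + (1 - d) / (2 * β) * ‖x‖ ^ 2)) : ℝ) : EReal) := by
    norm_cast
  rw [goalcast, EReal.coe_le_coe_iff]
  -- real goal; use inner product expansions
  have hX : X = (d - 1)^2 * ‖x‖^2 := by
    have : d • x - x = (d - 1) • x := by module
    rw [show X = ‖d • x - x‖^2 from rfl, this, norm_smul, Real.norm_eq_abs]
    rw [mul_pow, sq_abs]
  have hP : P = d^2 * ‖x‖^2 - 2*d*(inner ℝ x xp : ℝ) + ‖xp‖^2 := by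
    rw [show P = ‖d • x - xp‖^2 from rfl]
    simp only [← real_inner_self_eq_norm_sq, inner_sub_left, inner_sub_right,
      real_inner_smul_left, real_inner_smul_right, real_inner_comm xp x]
    ring
  have hD : D = ‖xp‖^2 - 2*(inner ℝ x xp : ℝ) + ‖x‖^2 := by
    rw [show D = ‖xp - x‖^2 from rfl]
    simp only [← real_inner_self_eq_norm_sq, inner_sub_left, inner_sub_right,
      real_inner_comm xp x]
    ring
  have hβr : β * (r - s) ≤ (X - P) / 2 - D / 2 := by
    have := mul_le_mul_of_nonneg_left hlim hβ.le
    have hx1 : β * (s + (X - P) / (2 * β) - D / (2 * β)) = β * s + (X - P)/2 - D/2 := by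
      field_simp
    nlinarith [this]
  have hrw : β * (r + (1 - d) / (2 * β) * ‖xp‖ ^ 2 - (s + (1 - d) / (2 * β) * ‖x‖ ^ 2))
      = β * (r - s) + (1 - d) / 2 * (‖xp‖ ^ 2 - ‖x‖ ^ 2) := by
    field_simp
    ring
  rw [hX, hP, hD] at hβr
  rw [hrw, hD]
  nlinarith [hβr]
end
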